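/- If S is a Gallai-Edmonds set of a finite graph G, then S is Tutte-Berge: some matching of G leaves exactly od(S) - |S| vertices exposed, and hence every such matching is maximum. -/

import Mathlib

open SimpleGraph Set

variable {V : Type*} [Fintype V] [DecidableEq V]

/-- The vertex set (in `V`) of a connected component of the graph induced on `B`. -/
def compSupp (G : SimpleGraph V) (B : Set V)
    (c : (G.induce B).ConnectedComponent) : Set V :=
  Subtype.val '' c.supp

/-- `A` is (the vertex set of) a connected component of `G` restricted to `B`. -/
def IsCompOf (G : SimpleGraph V) (B : Set V) (A : Set V) : Prop :=
  ∃ c : (G.induce B).ConnectedComponent, A = compSupp G B c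

/-- The number of odd connected components of `G` restricted to `B`. -/
noncomputable def oddComps (G : SimpleGraph V) (B : Set V) : ℕ :=
  Set.ncard {c : (G.induce B).ConnectedComponent | Odd (compSupp G B c).ncard}

/-- The deficiency `df(S) = od(S) - |S|`. -/
noncomputable def df (G : SimpleGraph V) (S : Set V) : ℤ :=
  (oddComps G Sᶜ : ℤ) - S.ncard

/-- The induced subgraph on `A` has a perfect matching. -/
def HasPM (G : SimpleGraph V) (A : Set V) : Prop :=
  ∃ M : Subgraph (G.induce A), M.IsPerfectMatching

/-- `Df(S)`: total number of vertices in components of `G - S` with no perfect matching. -/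
noncomputable def Df (G : SimpleGraph V) (S : Set V) : ℕ :=
  Set.ncard (⋃ c ∈ {c : (G.induce Sᶜ).ConnectedComponent |
    ¬ HasPM G (compSupp G Sᶜ c)}, compSupp G Sᶜ c)

/-- The set of `M`-exposed vertices. -/
def exposed (G : SimpleGraph V) (M : Subgraph G) : Set V :=
  {v | v ∉ M.support}

/-- `A` induces a factor-critical graph. -/
def FactorCritical (G : SimpleGraph V) (A : Set V) : Prop :=
  ∀ v ∈ A, HasPM G (A \ {v})

/-- The neighborhood of `T ⊆ S` in the bipartite minor `⟨G,S⟩`: the odd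
`S`-components adjacent to some vertex of `T`. -/
def minorNbhd (G : SimpleGraph V) (S T : Set V) :
    Set (G.induce Sᶜ).ConnectedComponent :=
  {c | Odd (compSupp G Sᶜ c).ncard ∧ ∃ u ∈ T, ∃ w ∈ compSupp G Sᶜ c, G.Adj u w}

/-- `S` is a Gallai-Edmonds set of `G`. -/
def GallaiEdmonds (G : SimpleGraph V) (S : Set V) : Prop :=
  (∀ c : (G.induce Sᶜ).ConnectedComponent,
      Even (compSupp G Sᶜ c).ncard → HasPM G (compSupp G Sᶜ c)) ∧
  (∀ c : (G.induce Sᶜ).ConnectedComponent,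
      Odd (compSupp G Sᶜ c).ncard → FactorCritical G (compSupp G Sᶜ c)) ∧
  (∀ T ⊆ S, T.Nonempty → T.ncard + 1 ≤ (minorNbhd G S T).ncard)

/-- `w` and `w'` lie in the same `S`-component. -/
def SameComp (G : SimpleGraph V) (S : Set V) (w w' : V) : Prop :=
  ∃ c : (G.induce Sᶜ).ConnectedComponent,
    w ∈ compSupp G Sᶜ c ∧ w' ∈ compSupp G Sᶜ c

/-- `M` is a maximum matching of `G`. -/
def IsMaximumMatching (G : SimpleGraph V) (M : Subgraph G) : Prop :=
  M.IsMatching ∧ ∀ M' : Subgraph G, M'.IsMatching →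
    M'.edgeSet.ncard ≤ M.edgeSet.ncard
section AuxLemmas

set_option linter.unusedVariables false
set_option linter.unusedSectionVars false

/-- Inclusion homomorphism from an induced subgraph. -/
def inclHom (G : SimpleGraph V) (A : Set V) : G.induce A →g G :=
  ⟨Subtype.val, fun {a b} h => h⟩

variable {G : SimpleGraph V} {B : Set V}

lemma mem_compSupp {c : (G.induce B).ConnectedComponent} {v : V} :
    v ∈ compSupp G B c ↔ ∃ hv : v ∈ B, (G.induce B).connectedComponentMk ⟨v, hv⟩ = c := by
  constructor
  · rintro ⟨⟨u, hu⟩, hsupp, rfl⟩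
    exact ⟨hu, hsupp⟩
  · rintro ⟨hv, hc⟩
    exact ⟨⟨v, hv⟩, hc, rfl⟩

lemma compSupp_subset (c : (G.induce B).ConnectedComponent) : compSupp G B c ⊆ B := by
  rintro v ⟨u, _, rfl⟩; exact u.2

lemma compSupp_nonempty (c : (G.induce B).ConnectedComponent) : (compSupp G B c).Nonempty := by
  obtain ⟨u, hu⟩ := c.exists_rep
  exact ⟨u.1, mem_compSupp.mpr ⟨u.2, hu⟩⟩

lemma eq_of_mem_compSupp {c d : (G.induce B).ConnectedComponent} {v : V}
    (hc : v ∈ compSupp G B c) (hd : v ∈ compSupp G B d) : c = d := by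
  obtain ⟨hv, rfl⟩ := mem_compSupp.mp hc
  obtain ⟨hv', rfl⟩ := mem_compSupp.mp hd
  rfl

lemma adj_mem_compSupp {c : (G.induce B).ConnectedComponent} {v w : V}
    (hv : v ∈ compSupp G B c) (hw : w ∈ B) (hadj : G.Adj v w) : w ∈ compSupp G B c := by
  obtain ⟨hvB, rfl⟩ := mem_compSupp.mp hv
  refine mem_compSupp.mpr ⟨hw, ?_⟩
  exact ConnectedComponent.sound
    (Adj.reachable (by exact hadj.symm : (G.induce B).Adj ⟨w, hw⟩ ⟨v, hvB⟩))

lemma iUnion_compSupp : ⋃ c, compSupp G B c = B := by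
  ext v
  simp only [Set.mem_iUnion, mem_compSupp]
  exact ⟨fun ⟨c, hv, _⟩ => hv, fun hv => ⟨(G.induce B).connectedComponentMk ⟨v, hv⟩, hv, rfl⟩⟩

lemma exists_matching_of_hasPM (G : SimpleGraph V) (A : Set V) (h : HasPM G A) :
    ∃ M : Subgraph G, M.IsMatching ∧ M.verts = A := by
  obtain ⟨M', hM'⟩ := h
  refine ⟨M'.map (inclHom G A), hM'.1.map _ Subtype.val_injective, ?_⟩
  have : M'.verts = Set.univ := Set.eq_univ_of_forall hM'.2
  simp only [Subgraph.map_verts, this, Set.image_univ]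
  exact Subtype.range_coe

lemma matching_verts_ncard {G : SimpleGraph V} {M : Subgraph G} (h : M.IsMatching) :
    M.verts.ncard = 2 * M.edgeSet.ncard := by
  classical
  have h2 : M.edgeSet.ncard = M.coe.edgeSet.ncard := by
    rw [← M.image_coe_edgeSet_coe]
    exact Set.ncard_image_of_injective _ (Sym2.map.injective Subtype.val_injective)
  have deg1 : ∀ (v : M.verts) (inst : Fintype (M.coe.neighborSet v)),
      @SimpleGraph.degree _ M.coe v inst = 1 := by
    intro v inst
    rw [← @card_neighborSet_eq_degree _ M.coe v inst]
    obtain ⟨w, hw, huniq⟩ := h v.2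
    refine Fintype.card_eq_one_iff.mpr ⟨⟨⟨w, M.edge_vert hw.symm⟩, hw⟩, ?_⟩
    rintro ⟨y, hy⟩
    exact Subtype.ext (Subtype.ext (huniq y hy))
  have key : M.verts.toFinset.card = 2 * M.coe.edgeFinset.card := by
    rw [Set.toFinset_card, ← Finset.card_univ, Finset.card_eq_sum_ones,
      ← M.coe.sum_degrees_eq_twice_card_edges]
    exact Finset.sum_congr rfl fun v _ => (deg1 v _).symm
  have h3 : M.coe.edgeSet.ncard = Fintype.card M.coe.edgeSet := by
    rw [← Nat.card_eq_fintype_card]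
    exact Nat.card_coe_set_eq _
  rw [h2, Set.ncard_eq_toFinset_card', key, h3, ← edgeFinset_card]

/-- If an odd component is fully covered by a matching, some vertex of it is
matched into `S`. -/
lemma odd_comp_matched_into_S {G : SimpleGraph V} {S : Set V} {M : Subgraph G}
    (hM : M.IsMatching) (c : (G.induce Sᶜ).ConnectedComponent)
    (hodd : Odd (compSupp G Sᶜ c).ncard)
    (hcov : ∀ v ∈ compSupp G Sᶜ c, v ∈ M.support) :
    ∃ v ∈ compSupp G Sᶜ c, ∃ s ∈ S, M.Adj v s := by
  by_contra hcon
  push_neg at hcon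
  have hind : (M.induce (compSupp G Sᶜ c)).IsMatching := by
    intro v hv
    have hvK : v ∈ compSupp G Sᶜ c := hv
    obtain ⟨w, hw⟩ := (Subgraph.mem_support M).mp (hcov v hvK)
    obtain ⟨w', hw', huniq⟩ := hM (M.support_subset_verts (hcov v hvK))
    have hwK : w ∈ compSupp G Sᶜ c := by
      have hwS : w ∉ S := fun hwS => hcon v hvK w hwS hw
      exact adj_mem_compSupp hvK hwS (M.adj_sub hw)
    refine ⟨w, ⟨hvK, hwK, hw⟩, ?_⟩
    intro y hy
    rw [huniq y hy.2.2, huniq w hw]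
  have heven : Even ((M.induce (compSupp G Sᶜ c)).verts.ncard) := by
    rw [matching_verts_ncard hind]
    exact even_two_mul _
  rw [Subgraph.induce_verts] at heven
  exact (Nat.not_even_iff_odd.mpr hodd) heven

/-- Any matching exposes at least `df G S` vertices. -/
lemma df_le_exposed {G : SimpleGraph V} (S : Set V) {M : Subgraph G}
    (hM : M.IsMatching) : df G S ≤ ((exposed G M).ncard : ℤ) := by
  classical
  rcases isEmpty_or_nonempty V with hemp | hne
  · have hnoc : ∀ c : (G.induce Sᶜ).ConnectedComponent, False := fun c => by
      obtain ⟨v, -⟩ := c.exists_rep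
      exact isEmptyElim v.1
    have h0 : oddComps G Sᶜ = 0 := by
      have hempty : {c : (G.induce Sᶜ).ConnectedComponent | Odd (compSupp G Sᶜ c).ncard} = ∅ :=
        Set.eq_empty_of_forall_notMem fun c _ => hnoc c
      rw [oddComps, hempty, Set.ncard_empty]
    have h1 : S.ncard = 0 := by
      rw [Set.eq_empty_of_isEmpty S, Set.ncard_empty]
    rw [df, h0, h1]
    positivity
  set Codd := {c : (G.induce Sᶜ).ConnectedComponent | Odd (compSupp G Sᶜ c).ncard} with hCodd
  set bad := {c ∈ Codd | ∀ v ∈ compSupp G Sᶜ c, v ∈ M.support} with hbad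
  have h1 : bad.ncard ≤ S.ncard := by
    have hchoice : ∀ c ∈ bad, ∃ s, s ∈ S ∧ ∃ v ∈ compSupp G Sᶜ c, M.Adj v s := by
      rintro c ⟨hodd, hcov⟩
      obtain ⟨v, hv, s, hs, hadj⟩ := odd_comp_matched_into_S hM c hodd hcov
      exact ⟨s, hs, v, hv, hadj⟩
    choose! g hg using hchoice
    refine Set.ncard_le_ncard_of_injOn g (fun c hc => (hg c hc).1) ?_ S.toFinite
    intro c hc d hd heq
    obtain ⟨v, hv, hadj⟩ := (hg c hc).2
    obtain ⟨u, hu, hadj'⟩ := (hg d hd).2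
    have hveq : v = u := by
      obtain ⟨x, hx, huniq⟩ := hM (M.edge_vert hadj.symm)
      have hu2 : M.Adj (g c) u := by rw [heq]; exact hadj'.symm
      rw [huniq v hadj.symm, huniq u hu2]
    refine eq_of_mem_compSupp hv ?_
    rw [hveq]; exact hu
  have h2 : (Codd \ bad).ncard ≤ (exposed G M).ncard := by
    have hchoice : ∀ c ∈ Codd \ bad, ∃ v, v ∈ exposed G M ∧ v ∈ compSupp G Sᶜ c := by
      rintro c ⟨hc, hcb⟩
      simp only [hbad, Set.mem_setOf_eq, not_and, not_forall] at hcb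
      obtain ⟨v, hv, hvs⟩ := hcb hc
      exact ⟨v, hvs, hv⟩
    choose! e he using hchoice
    refine Set.ncard_le_ncard_of_injOn e (fun c hc => (he c hc).1) ?_ (exposed G M).toFinite
    intro c hc d hd heq
    refine eq_of_mem_compSupp (he c hc).2 ?_
    rw [heq]; exact (he d hd).2
  have hsplit : Codd.ncard = (Codd \ bad).ncard + bad.ncard :=
    (Set.ncard_diff_add_ncard_of_subset (fun c hc => hc.1) Codd.toFinite).symm
  have hod : oddComps G Sᶜ = Codd.ncard := rfl
  rw [df, hod]
  push_cast [hsplit]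
  omega

end AuxLemmas

/-- Existence part: a Gallai-Edmonds set admits a matching exposing exactly `df G S`
vertices. -/
lemma exists_good_matching {G : SimpleGraph V} {S : Set V} (h : GallaiEdmonds G S) :
    ∃ M : Subgraph G, M.IsMatching ∧ ((exposed G M).ncard : ℤ) = df G S := by
  classical
  obtain ⟨hEven, hOdd, hHall⟩ := h
  -- Hall's condition for the bipartite minor
  have hallcond : ∀ A : Finset ↥S,
      A.card ≤ (A.biUnion fun s => (minorNbhd G S {(s : V)}).toFinite.toFinset).card := by
    intro A
    rcases A.eq_empty_or_nonempty with rfl | hA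
    · simp
    have hbiU : (A.biUnion fun s => (minorNbhd G S {(s : V)}).toFinite.toFinset)
        = (minorNbhd G S (Subtype.val '' (A : Set ↥S))).toFinite.toFinset := by
      ext c
      simp only [Finset.mem_biUnion, Set.Finite.mem_toFinset, minorNbhd, Set.mem_setOf_eq]
      constructor
      · rintro ⟨s, hsA, hodd, u, hu, w, hw, hadj⟩
        rw [Set.mem_singleton_iff] at hu
        exact ⟨hodd, u, ⟨s, hsA, hu.symm⟩, w, hw, hadj⟩
      · rintro ⟨hodd, u, ⟨s, hsA, rfl⟩, w, hw, hadj⟩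
        exact ⟨s, hsA, hodd, (s : V), rfl, w, hw, hadj⟩
    have hTsub : Subtype.val '' (A : Set ↥S) ⊆ S := by rintro v ⟨s, _, rfl⟩; exact s.2
    have hTne : (Subtype.val '' (A : Set ↥S)).Nonempty := (hA.to_set).image _
    have hH := hHall _ hTsub hTne
    have hTcard : (Subtype.val '' (A : Set ↥S)).ncard = A.card := by
      rw [Set.ncard_image_of_injective _ Subtype.val_injective, Set.ncard_coe_finset]
    rw [hbiU, ← Set.ncard_eq_toFinset_card _ (minorNbhd G S _).toFinite]
    omega
  obtain ⟨f, hfinj, hf⟩ :=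
    (Finset.all_card_le_biUnion_card_iff_exists_injective
      (fun s : ↥S => (minorNbhd G S {(s : V)}).toFinite.toFinset)).mp hallcond
  have hf' : ∀ s : ↥S, f s ∈ minorNbhd G S {(s : V)} := fun s =>
    (Set.Finite.mem_toFinset _).mp (hf s)
  have hfodd : ∀ s : ↥S, Odd (compSupp G Sᶜ (f s)).ncard := fun s => (hf' s).1
  have hfadj : ∀ s : ↥S, ∃ w ∈ compSupp G Sᶜ (f s), G.Adj (s : V) w := by
    intro s
    obtain ⟨-, u, hu, w, hw, hadj⟩ := hf' s
    rw [Set.mem_singleton_iff] at hu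
    exact ⟨w, hw, hu ▸ hadj⟩
  choose w hw1 hw2 using hfadj
  have hrep : ∀ c : (G.induce Sᶜ).ConnectedComponent, ∃ v, v ∈ compSupp G Sᶜ c :=
    fun c => compSupp_nonempty c
  choose rep hrep using hrep
  set P : (G.induce Sᶜ).ConnectedComponent → Prop :=
    fun c => Odd (compSupp G Sᶜ c).ncard ∧ ¬∃ s : ↥S, f s = c with hP
  set Sc : (G.induce Sᶜ).ConnectedComponent → Set V :=
    fun c => {x | ∃ s : ↥S, f s = c ∧ (s : V) = x} with hSc
  have hScS : ∀ c, Sc c ⊆ S := by rintro c x ⟨s, _, rfl⟩; exact s.2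
  have hKS : ∀ c, compSupp G Sᶜ c ⊆ Sᶜ := fun c => compSupp_subset c
  -- per-component matchings
  have hspec : ∀ c : (G.induce Sᶜ).ConnectedComponent, ∃ N : Subgraph G, N.IsMatching ∧
      N.verts = (compSupp G Sᶜ c ∪ Sc c) \ (if P c then {rep c} else ∅) := by
    intro c
    by_cases hs : ∃ s : ↥S, f s = c
    · obtain ⟨s, rfl⟩ := hs
      have hScc : Sc (f s) = {(s : V)} := by
        ext x
        simp only [hSc, Set.mem_setOf_eq, Set.mem_singleton_iff]
        constructor
        · rintro ⟨s', hs', rfl⟩; rw [hfinj hs']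
        · rintro rfl; exact ⟨s, rfl, rfl⟩
      have hnP : ¬ P (f s) := fun hPf => hPf.2 ⟨s, rfl⟩
      obtain ⟨M₁, hM₁, hM₁v⟩ := exists_matching_of_hasPM G _
        (hOdd (f s) (hfodd s) (w s) (hw1 s))
      have hsS : (s : V) ∈ S := s.2
      have hsK : (s : V) ∉ compSupp G Sᶜ (f s) := fun hmem => (hKS _ hmem) hsS
      have hwS : w s ∉ S := hKS _ (hw1 s)
      refine ⟨G.subgraphOfAdj (hw2 s) ⊔ M₁, ?_, ?_⟩
      · apply (Subgraph.IsMatching.subgraphOfAdj (hw2 s)).sup hM₁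
        rw [hM₁.support_eq_verts, (Subgraph.IsMatching.subgraphOfAdj (hw2 s)).support_eq_verts,
          hM₁v, subgraphOfAdj_verts]
        rw [Set.disjoint_left]
        rintro x (rfl | rfl) hx
        · exact hsK hx.1
        · exact hx.2 rfl
      · rw [Subgraph.verts_sup, hM₁v, subgraphOfAdj_verts, if_neg hnP, hScc, Set.diff_empty]
        ext x
        simp only [Set.mem_union, Set.mem_insert_iff, Set.mem_singleton_iff, Set.mem_diff]
        constructor
        · rintro ((rfl | rfl) | ⟨hxK, -⟩)
          · exact Or.inr rfl
          · exact Or.inl (hw1 s)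
          · exact Or.inl hxK
        · rintro (hxK | rfl)
          · by_cases hxw : x = w s
            · exact Or.inl (Or.inr hxw)
            · exact Or.inr ⟨hxK, hxw⟩
          · exact Or.inl (Or.inl rfl)
    · have hScc : Sc c = ∅ := by
        ext x
        simp only [hSc, Set.mem_setOf_eq, Set.mem_empty_iff_false, iff_false, not_exists]
        rintro s ⟨hfs, -⟩
        exact hs ⟨s, hfs⟩
      by_cases hodd : Odd (compSupp G Sᶜ c).ncard
      · have hPc : P c := ⟨hodd, hs⟩
        obtain ⟨M₁, hM₁, hM₁v⟩ := exists_matching_of_hasPM G _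
          (hOdd c hodd (rep c) (hrep c))
        exact ⟨M₁, hM₁, by rw [hM₁v, if_pos hPc, hScc, Set.union_empty]⟩
      · have hPc : ¬ P c := fun hPc => hodd hPc.1
        obtain ⟨M₁, hM₁, hM₁v⟩ := exists_matching_of_hasPM G _
          (hEven c (Nat.not_odd_iff_even.mp hodd))
        exact ⟨M₁, hM₁, by
          rw [hM₁v, if_neg hPc, hScc, Set.union_empty, Set.diff_empty]⟩
  choose N hNm hNv using hspec
  have hVsub : ∀ c, (N c).verts ⊆ compSupp G Sᶜ c ∪ Sc c := by
    intro c
    rw [hNv c]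
    exact Set.diff_subset
  have hdisj : Pairwise fun c d => Disjoint (N c).support (N d).support := by
    intro c d hcd
    rw [(hNm c).support_eq_verts, (hNm d).support_eq_verts, Set.disjoint_left]
    intro x hxc hxd
    rcases hVsub c hxc with hxK | hxS
    · rcases hVsub d hxd with hxK' | hxS'
      · exact hcd (eq_of_mem_compSupp hxK hxK')
      · exact (hKS c hxK) (hScS d hxS')
    · rcases hVsub d hxd with hxK' | hxS'
      · exact (hKS d hxK') (hScS c hxS)
      · obtain ⟨s, hfs, hsx⟩ := hxS
        obtain ⟨s', hfs', hsx'⟩ := hxS'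
        have : s = s' := Subtype.ext (hsx.trans hsx'.symm)
        exact hcd (by rw [← hfs, ← hfs', this])
  refine ⟨⨆ c, N c, Subgraph.IsMatching.iSup hNm hdisj, ?_⟩
  have hMverts : (⨆ c, N c).verts = Set.univ \ (rep '' {c | P c}) := by
    rw [Subgraph.verts_iSup]
    ext v
    simp only [Set.mem_iUnion, Set.mem_diff, Set.mem_univ, true_and, Set.mem_image,
      Set.mem_setOf_eq]
    constructor
    · rintro ⟨c, hvc⟩
      rw [hNv c] at hvc
      obtain ⟨hmem, hnot⟩ := hvc
      rintro ⟨d, hPd, rfl⟩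
      rcases hmem with hKc | hScc
      · have hcd : c = d := eq_of_mem_compSupp hKc (hrep d)
        subst hcd
        exact hnot (by rw [if_pos hPd]; exact rfl)
      · exact (hKS d (hrep d)) (hScS c hScc)
    · intro hnX
      by_cases hvS : v ∈ S
      · refine ⟨f ⟨v, hvS⟩, ?_⟩
        rw [hNv _]
        refine ⟨Or.inr ⟨⟨v, hvS⟩, rfl, rfl⟩, ?_⟩
        intro hvmem
        by_cases hPc : P (f ⟨v, hvS⟩)
        · rw [if_pos hPc] at hvmem
          rw [Set.mem_singleton_iff] at hvmem
          exact absurd ⟨_, hPc, hvmem.symm⟩ hnX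
        · rw [if_neg hPc] at hvmem
          exact hvmem
      · have hvSc : v ∈ Sᶜ := hvS
        set c := (G.induce Sᶜ).connectedComponentMk ⟨v, hvSc⟩ with hc
        have hvK : v ∈ compSupp G Sᶜ c := mem_compSupp.mpr ⟨hvSc, rfl⟩
        refine ⟨c, ?_⟩
        rw [hNv c]
        refine ⟨Or.inl hvK, ?_⟩
        intro hvmem
        by_cases hPc : P c
        · rw [if_pos hPc] at hvmem
          rw [Set.mem_singleton_iff] at hvmem
          exact hnX ⟨c, hPc, hvmem.symm⟩
        · rw [if_neg hPc] at hvmem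
          exact hvmem
  -- compute the exposed set
  have hexp : exposed G (⨆ c, N c) = rep '' {c | P c} := by
    have hsupp : (⨆ c, N c).support = (⨆ c, N c).verts :=
      (Subgraph.IsMatching.iSup hNm hdisj).support_eq_verts
    ext v
    simp only [exposed, Set.mem_setOf_eq, hsupp, hMverts, Set.mem_diff, Set.mem_univ, true_and,
      not_not]
  rw [hexp]
  -- count
  have hrepinj : Set.InjOn rep {c | P c} := by
    intro c hc d hd heq
    refine eq_of_mem_compSupp (hrep c) ?_
    rw [heq]; exact hrep d
  rw [Set.ncard_image_of_injOn hrepinj]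
  have hPset : {c | P c} = {c : (G.induce Sᶜ).ConnectedComponent |
      Odd (compSupp G Sᶜ c).ncard} \ Set.range f := by
    ext c
    simp only [hP, Set.mem_setOf_eq, Set.mem_diff, Set.mem_range]
  have hrsub : Set.range f ⊆ {c : (G.induce Sᶜ).ConnectedComponent |
      Odd (compSupp G Sᶜ c).ncard} := by
    rintro c ⟨s, rfl⟩
    exact hfodd s
  have hrcard : (Set.range f).ncard = S.ncard := by
    rw [← Set.image_univ, Set.ncard_image_of_injective _ hfinj, Set.ncard_univ,
      Nat.card_coe_set_eq]
  have hle : S.ncard ≤ oddComps G Sᶜ := by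
    rw [← hrcard]
    exact Set.ncard_le_ncard hrsub (Set.toFinite _)
  have hdiff : ({c : (G.induce Sᶜ).ConnectedComponent |
      Odd (compSupp G Sᶜ c).ncard} \ Set.range f).ncard = oddComps G Sᶜ - S.ncard := by
    rw [Set.ncard_diff hrsub (Set.toFinite _), hrcard]
    rfl
  rw [hPset, hdiff, df]
  push_cast [Nat.cast_sub hle]
  ring


/-- A Gallai-Edmonds set `S` is Tutte-Berge: some matching leaves exactly
`od(S) - |S|` vertices exposed, and every such matching is maximum. -/
theorem stmt_8 (G : SimpleGraph V) (S : Set V) (h : GallaiEdmonds G S) :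
    (∃ M : Subgraph G, M.IsMatching ∧ ((exposed G M).ncard : ℤ) = df G S) ∧
    (∀ M : Subgraph G, M.IsMatching → ((exposed G M).ncard : ℤ) = df G S →
      IsMaximumMatching G M) := by
  constructor
  · exact exists_good_matching h
  · intro M hM hexp
    refine ⟨hM, ?_⟩
    intro M' hM'
    have h1 := df_le_exposed S hM'
    have hcomp : ∀ (N : Subgraph G), N.IsMatching →
        N.verts.ncard + (exposed G N).ncard = Nat.card V := by
      intro N hN
      have : exposed G N = (N.support)ᶜ := by
        ext v; simp [exposed]
      rw [this, ← hN.support_eq_verts]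
      exact Set.ncard_add_ncard_compl _
    have e1 := hcomp M hM
    have e2 := hcomp M' hM'
    have a1 := matching_verts_ncard hM
    have a2 := matching_verts_ncard hM'
    omega
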